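/- Let m₁, ..., m_r be natural numbers and p₁, ..., p_r integers. If the system t + p_i ≡ 0 (mod m_i) (1 ≤ i ≤ r) is solvable, then lcm(m₁, ..., m_r) ≥ (m₁ ⋯ m_r) / K where K = ∏_{i<j} |p_i − p_j| (assuming the p_i are pairwise distinct). Equivalently, 1/lcm(m₁,...,m_r) ≤ K/(m₁⋯m_r). -/

import Mathlib

open Finset

lemma pairs_insert_eq {ι : Type*} [LinearOrder ι] {k : ι} {s : Finset ι} (hk : k ∉ s) :
    ((insert k s) ×ˢ (insert k s)).filter (fun ij => ij.1 < ij.2)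
      = ((s ×ˢ s).filter (fun ij => ij.1 < ij.2)) ∪
        s.image (fun j => if k < j then (k, j) else (j, k)) := by
  ext ⟨i, j⟩
  simp only [mem_filter, mem_product, mem_insert, mem_union, mem_image]
  constructor
  · rintro ⟨⟨hi | hi, hj | hj⟩, hij⟩
    · exact absurd (hi ▸ hj ▸ hij) (lt_irrefl _)
    · subst hi
      exact Or.inr ⟨j, hj, by simp [hij]⟩
    · subst hj
      refine Or.inr ⟨i, hi, ?_⟩
      rw [if_neg (not_lt.mpr hij.le)]
    · exact Or.inl ⟨⟨hi, hj⟩, hij⟩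
  · rintro (⟨⟨hi, hj⟩, hij⟩ | ⟨x, hx, hx2⟩)
    · exact ⟨⟨Or.inr hi, Or.inr hj⟩, hij⟩
    · by_cases h : k < x
      · rw [if_pos h] at hx2
        obtain ⟨rfl, rfl⟩ := Prod.mk.inj hx2
        exact ⟨⟨Or.inl rfl, Or.inr hx⟩, h⟩
      · rw [if_neg h] at hx2
        obtain ⟨rfl, rfl⟩ := Prod.mk.inj hx2
        have hxk : x < k := lt_of_le_of_ne (not_lt.mp h) (fun he => hk (he ▸ hx))
        exact ⟨⟨Or.inr hx, Or.inl rfl⟩, hxk⟩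

lemma pairs_prod_insert' {ι : Type*} [LinearOrder ι] {k : ι} {s : Finset ι} (hk : k ∉ s)
    (g : ι → ι → ℕ) (hg : ∀ a b, g a b = g b a) :
    ∏ ij ∈ ((insert k s) ×ˢ (insert k s)).filter (fun ij => ij.1 < ij.2), g ij.1 ij.2
      = (∏ j ∈ s, g k j) *
        ∏ ij ∈ (s ×ˢ s).filter (fun ij => ij.1 < ij.2), g ij.1 ij.2 := by
  rw [pairs_insert_eq hk, Finset.prod_union, mul_comm]
  · congr 1
    rw [Finset.prod_image]
    · refine Finset.prod_congr rfl fun j hj => ?_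
      by_cases h : k < j <;> simp [h, hg]
    · intro a ha b hb hab
      by_cases h1 : k < a <;> by_cases h2 : k < b <;>
        simp only [h1, h2, if_true, if_false, Prod.mk.injEq] at hab
      · exact hab.2
      · exact absurd hab.1 (fun he : k = b => hk (he ▸ hb))
      · exact absurd hab.1 (fun he : a = k => hk (he ▸ ha))
      · exact hab.1
  · rw [Finset.disjoint_left]
    rintro ⟨i, j⟩ hij h2
    simp only [mem_filter, mem_product] at hij
    simp only [mem_image] at h2
    obtain ⟨x, hx, hx2⟩ := h2
    by_cases h : k < x <;> simp only [h, if_true, if_false, Prod.mk.injEq] at hx2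
    · exact hk (hx2.1 ▸ hij.1.1)
    · exact hk (hx2.2 ▸ hij.1.2)

lemma gcd_lcm_dvd_prod' {ι : Type*} [DecidableEq ι] (m : ι → ℕ) (a : ℕ) (s : Finset ι) :
    Nat.gcd (s.lcm m) a ∣ ∏ i ∈ s, Nat.gcd (m i) a := by
  induction s using Finset.induction with
  | empty => simp
  | @insert k s hk ih =>
    rw [Finset.lcm_insert, Finset.prod_insert hk]
    calc Nat.gcd (lcm (m k) (s.lcm m)) a
        ∣ Nat.gcd (m k * s.lcm m) a :=
          Nat.gcd_dvd_gcd_of_dvd_left a (Nat.lcm_dvd_mul _ _)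
      _ ∣ Nat.gcd (m k) a * Nat.gcd (s.lcm m) a := by
          rw [Nat.gcd_comm (m k * s.lcm m) a, Nat.gcd_comm (m k) a, Nat.gcd_comm (s.lcm m) a]
          exact Nat.gcd_mul_right_dvd_mul_gcd a _ _
      _ ∣ _ := mul_dvd_mul_left _ ih

lemma prod_dvd_lcm_mul_gcds {ι : Type*} [LinearOrder ι] (m : ι → ℕ) (s : Finset ι) :
    ∏ i ∈ s, m i ∣
      s.lcm m * ∏ ij ∈ (s ×ˢ s).filter (fun ij => ij.1 < ij.2), Nat.gcd (m ij.1) (m ij.2) := by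
  classical
  induction s using Finset.induction with
  | empty => simp
  | @insert k s hk ih =>
    rw [Finset.prod_insert hk, Finset.lcm_insert,
      pairs_prod_insert' hk (fun a b => Nat.gcd (m a) (m b)) (fun a b => Nat.gcd_comm _ _)]
    have h1 : m k * ∏ i ∈ s, m i ∣
        m k * (s.lcm m * ∏ ij ∈ (s ×ˢ s).filter (fun ij => ij.1 < ij.2),
          Nat.gcd (m ij.1) (m ij.2)) := mul_dvd_mul_left _ ih
    refine h1.trans ?_
    have h2 : m k * s.lcm m = lcm (m k) (s.lcm m) * Nat.gcd (m k) (s.lcm m) := by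
      have h := Nat.gcd_mul_lcm (m k) (s.lcm m)
      show m k * s.lcm m = Nat.lcm (m k) (s.lcm m) * Nat.gcd (m k) (s.lcm m)
      rw [mul_comm] at h; exact h.symm
    have h3 : Nat.gcd (m k) (s.lcm m) ∣ ∏ j ∈ s, Nat.gcd (m k) (m j) := by
      rw [Nat.gcd_comm]
      refine (gcd_lcm_dvd_prod' m (m k) s).trans (dvd_of_eq ?_)
      exact Finset.prod_congr rfl fun j _ => Nat.gcd_comm _ _
    calc m k * (s.lcm m * ∏ ij ∈ (s ×ˢ s).filter (fun ij => ij.1 < ij.2),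
            Nat.gcd (m ij.1) (m ij.2))
        = lcm (m k) (s.lcm m) * (Nat.gcd (m k) (s.lcm m) *
            ∏ ij ∈ (s ×ˢ s).filter (fun ij => ij.1 < ij.2), Nat.gcd (m ij.1) (m ij.2)) := by
          rw [← mul_assoc, h2, mul_assoc]
      _ ∣ _ := mul_dvd_mul_left _ (mul_dvd_mul_right h3 _)

/-- If the system `t + pᵢ ≡ 0 (mod mᵢ)` is solvable and the `pᵢ` are pairwise
distinct, then `lcm(m₁,...,m_r) ≥ (m₁ ⋯ m_r) / K` where
`K = ∏_{i<j} |pᵢ - pⱼ|`. -/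
theorem lcm_lower_bound_of_solvable (r : ℕ) (m : Fin r → ℕ) (p : Fin r → ℤ)
    (hp : Function.Injective p)
    (hsol : ∃ t : ℤ, ∀ i, (m i : ℤ) ∣ t + p i) :
    (∏ i, (m i : ℝ)) ≤
      (∏ ij ∈ Finset.univ.filter (fun ij : Fin r × Fin r => ij.1 < ij.2),
        (|p ij.1 - p ij.2| : ℝ)) * ((Finset.univ.lcm m : ℕ) : ℝ) := by
  obtain ⟨t, ht⟩ := hsol
  by_cases hm : ∃ i, m i = 0
  · obtain ⟨i, hi⟩ := hm
    have h0 : (∏ i, (m i : ℝ)) = 0 :=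
      Finset.prod_eq_zero (Finset.mem_univ i) (by simp [hi])
    rw [h0]
    positivity
  · push_neg at hm
    have hdvd := prod_dvd_lcm_mul_gcds m Finset.univ
    rw [Finset.univ_product_univ] at hdvd
    set P := Finset.univ.filter (fun ij : Fin r × Fin r => ij.1 < ij.2) with hP
    have hpos : 0 < Finset.univ.lcm m * ∏ ij ∈ P, Nat.gcd (m ij.1) (m ij.2) := by
      apply Nat.mul_pos
      · rw [Nat.pos_iff_ne_zero, Ne, Finset.lcm_eq_zero_iff]
        simp only [Finset.mem_univ, true_and]
        rintro ⟨i, hi⟩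
        exact hm i hi
      · exact Finset.prod_pos fun ij _ =>
          Nat.pos_of_ne_zero fun h => hm ij.1 (Nat.eq_zero_of_gcd_eq_zero_left h)
    have key : (∏ i, m i) ≤
        Finset.univ.lcm m * ∏ ij ∈ P, Nat.gcd (m ij.1) (m ij.2) :=
      Nat.le_of_dvd hpos hdvd
    have hgb : ∀ ij ∈ P, (Nat.gcd (m ij.1) (m ij.2) : ℝ) ≤ (|p ij.1 - p ij.2| : ℝ) := by
      intro ij hij
      have hlt : ij.1 < ij.2 := (Finset.mem_filter.mp hij).2
      have h1 : (Nat.gcd (m ij.1) (m ij.2) : ℤ) ∣ p ij.1 - p ij.2 := by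
        have d1 : (Nat.gcd (m ij.1) (m ij.2) : ℤ) ∣ t + p ij.1 :=
          (Int.natCast_dvd_natCast.mpr (Nat.gcd_dvd_left _ _)).trans (ht ij.1)
        have d2 : (Nat.gcd (m ij.1) (m ij.2) : ℤ) ∣ t + p ij.2 :=
          (Int.natCast_dvd_natCast.mpr (Nat.gcd_dvd_right _ _)).trans (ht ij.2)
        simpa using dvd_sub d1 d2
      have hne : p ij.1 - p ij.2 ≠ 0 :=
        sub_ne_zero.mpr fun h => absurd (hp h) hlt.ne
      have h2 : (Nat.gcd (m ij.1) (m ij.2) : ℤ) ≤ |p ij.1 - p ij.2| :=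
        Int.le_of_dvd (abs_pos.mpr hne) ((dvd_abs _ _).mpr h1)
      exact_mod_cast h2
    calc (∏ i, (m i : ℝ)) = ((∏ i, m i : ℕ) : ℝ) := by push_cast; ring
      _ ≤ ((Finset.univ.lcm m * ∏ ij ∈ P, Nat.gcd (m ij.1) (m ij.2) : ℕ) : ℝ) := by
          exact_mod_cast key
      _ = ((Finset.univ.lcm m : ℕ) : ℝ) *
          ∏ ij ∈ P, (Nat.gcd (m ij.1) (m ij.2) : ℝ) := by push_cast; ring
      _ ≤ ((Finset.univ.lcm m : ℕ) : ℝ) * ∏ ij ∈ P, (|p ij.1 - p ij.2| : ℝ) := by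
          refine mul_le_mul_of_nonneg_left ?_ (by positivity)
          exact Finset.prod_le_prod (fun ij _ => by positivity) hgb
      _ = _ := mul_comm _ _
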